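/- Let d > 1 and let K₀ be a real number with K₀ > 4·(d − 1 − ln d − (1/2)·(ln d)²). Define Disc := 8·d·(ln d)² − 8·(d − 1)² + 4·(d − 1)·K₀ and c := (−2√2·(d·ln d − d + 1) − √Disc)/(2·(d − 1)), and define F(x) := 2·x·ln x·(ln x + √2·c − 2) + (x − 1)·(c² − 2√2·c + 4) for x > 0. Then: (i) F(1) = 0; (ii) F(d) = K₀; (iii) F″(x) = 2√2·c/x + 4·(ln x)/x and (x²/8)·(F″(x))² = F′(x) for all x > 0; and (iv) F″(x) < 0 for all x ∈ [1, d]. -/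

import Mathlib

theorem stmt_16 (d K₀ : ℝ) (hd : 1 < d)
    (hK₀ : K₀ > 4 * (d - 1 - Real.log d - (1 / 2) * (Real.log d) ^ 2))
    (Disc c : ℝ)
    (hDisc : Disc = 8 * d * (Real.log d) ^ 2 - 8 * (d - 1) ^ 2 + 4 * (d - 1) * K₀)
    (hc : c = (-(2 * Real.sqrt 2) * (d * Real.log d - d + 1) - Real.sqrt Disc)
        / (2 * (d - 1)))
    (F : ℝ → ℝ)
    (hF : ∀ x : ℝ, 0 < x →
      F x = 2 * x * Real.log x * (Real.log x + Real.sqrt 2 * c - 2)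
        + (x - 1) * (c ^ 2 - 2 * Real.sqrt 2 * c + 4)) :
    F 1 = 0 ∧
    F d = K₀ ∧
    (∀ x : ℝ, 0 < x →
      deriv (deriv F) x = 2 * Real.sqrt 2 * c / x + 4 * Real.log x / x ∧
      (x ^ 2 / 8) * (deriv (deriv F) x) ^ 2 = deriv F x) ∧
    (∀ x ∈ Set.Icc (1 : ℝ) d, deriv (deriv F) x < 0) := by
  set s2 := Real.sqrt 2 with hs2
  have hs2sq : s2 ^ 2 = 2 := Real.sq_sqrt (by norm_num)
  have hs2pos : 0 < s2 := Real.sqrt_pos.mpr (by norm_num)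
  set L := Real.log d with hL
  have hd1' : (0:ℝ) < d - 1 := by linarith
  have hdpos : (0:ℝ) < d := by linarith
  have hLlt : L < d - 1 := Real.log_lt_sub_one_of_pos hdpos (by linarith)
  -- Disc positivity
  have hDiscpos : 0 < Disc := by
    have h1 : 0 < (d - 1) * (K₀ - 4 * (d - 1 - L - (1/2) * L ^ 2)) :=
      mul_pos hd1' (by linarith)
    nlinarith [sq_nonneg (L - (d - 1))]
  have hDiscnn : 0 ≤ Disc := le_of_lt hDiscpos
  set S := Real.sqrt Disc with hS
  have hS2 : S ^ 2 = Disc := Real.sq_sqrt hDiscnn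
  -- relation from hc
  have hcrel : 2 * (d - 1) * c = -(2 * s2) * (d * L - d + 1) - S := by
    rw [hc]; field_simp
  -- key inequality: 2*s2*(d-1-L) < S
  have hkey : 2 * s2 * (d - 1 - L) < S := by
    apply Real.lt_sqrt_of_sq_lt
    nlinarith [sq_nonneg (L - (d - 1)),
      mul_pos hd1' (by linarith : (0:ℝ) < K₀ - 4 * (d - 1 - L - (1/2) * L ^ 2))]
  have hcneg : 2 * s2 * c + 4 * L < 0 := by
    have h1 : 2 * (d - 1) * (2 * s2 * c + 4 * L)
        = 2 * s2 * (2 * s2 * (d - 1 - L) - S) := by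
      linear_combination 2 * s2 * hcrel - 4 * L * (d - 1) * hs2sq
    nlinarith [mul_pos hs2pos (by linarith : (0:ℝ) < S - 2 * s2 * (d - 1 - L))]
  -- explicit derivatives
  have hGd : ∀ x : ℝ, 0 < x → HasDerivAt F
      (2 * (Real.log x) ^ 2 + 2 * s2 * c * Real.log x + c ^ 2) x := by
    intro x hx
    have hl : HasDerivAt Real.log x⁻¹ x := Real.hasDerivAt_log hx.ne'
    have h1 : HasDerivAt (fun y : ℝ => 2 * y) 2 x := by
      simpa using (hasDerivAt_id x).const_mul 2
    have h2 : HasDerivAt (fun y : ℝ => 2 * y * Real.log y)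
        (2 * Real.log x + 2 * x * x⁻¹) x := h1.mul hl
    have h3 : HasDerivAt (fun y : ℝ => Real.log y + s2 * c - 2) x⁻¹ x :=
      (hl.add_const _).sub_const 2
    have h4 := h2.mul h3
    have h5 : HasDerivAt (fun y : ℝ => (y - 1) * (c ^ 2 - 2 * s2 * c + 4))
        (c ^ 2 - 2 * s2 * c + 4) x := by
      simpa using ((hasDerivAt_id x).sub_const 1).mul_const (c ^ 2 - 2 * s2 * c + 4)
    have h6 := h4.add h5
    have hev : F =ᶠ[nhds x] fun y =>
        2 * y * Real.log y * (Real.log y + s2 * c - 2)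
          + (y - 1) * (c ^ 2 - 2 * s2 * c + 4) :=
      Filter.eventuallyEq_of_mem (Ioi_mem_nhds hx) fun y hy => hF y hy
    have h7 := h6.congr_of_eventuallyEq hev
    refine h7.congr_deriv ?_
    field_simp
    ring
  have hderivF : ∀ x : ℝ, 0 < x →
      deriv F x = 2 * (Real.log x) ^ 2 + 2 * s2 * c * Real.log x + c ^ 2 :=
    fun x hx => (hGd x hx).deriv
  have hGd2 : ∀ x : ℝ, 0 < x → HasDerivAt (deriv F)
      (2 * s2 * c / x + 4 * Real.log x / x) x := by
    intro x hx
    have hl : HasDerivAt Real.log x⁻¹ x := Real.hasDerivAt_log hx.ne'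
    have h1 : HasDerivAt (fun y : ℝ => (Real.log y) ^ 2)
        (2 * Real.log x * x⁻¹) x := by
      simpa using hl.fun_pow 2
    have h2 : HasDerivAt (fun y : ℝ =>
        2 * (Real.log y) ^ 2 + 2 * s2 * c * Real.log y + c ^ 2)
        (2 * (2 * Real.log x * x⁻¹) + 2 * s2 * c * x⁻¹) x :=
      (((h1.const_mul 2).add (hl.const_mul (2 * s2 * c))).add_const _)
    have hev : deriv F =ᶠ[nhds x] fun y =>
        2 * (Real.log y) ^ 2 + 2 * s2 * c * Real.log y + c ^ 2 :=
      Filter.eventuallyEq_of_mem (Ioi_mem_nhds hx) fun y hy => hderivF y hy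
    have h3 := h2.congr_of_eventuallyEq hev
    refine h3.congr_deriv ?_
    field_simp
    ring
  have hderiv2 : ∀ x : ℝ, 0 < x →
      deriv (deriv F) x = 2 * s2 * c / x + 4 * Real.log x / x :=
    fun x hx => (hGd2 x hx).deriv
  refine ⟨?_, ?_, ?_, ?_⟩
  · rw [hF 1 one_pos]; simp
  · rw [hF d hdpos]
    have hsq : (2 * (d - 1) * c + 2 * s2 * (d * L - d + 1)) ^ 2 = Disc := by
      have : 2 * (d - 1) * c + 2 * s2 * (d * L - d + 1) = -S := by linarith
      rw [this]; rw [neg_pow]; simpa using hS2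
    have h4 : (4*(d-1)) * (2 * d * L * (L + s2 * c - 2)
        + (d - 1) * (c ^ 2 - 2 * s2 * c + 4)) = (4*(d-1)) * K₀ := by
      linear_combination hsq + hDisc - 4 * (d * L - d + 1)^2 * hs2sq
    exact mul_left_cancel₀ (by positivity) h4
  · intro x hx
    refine ⟨hderiv2 x hx, ?_⟩
    rw [hderiv2 x hx, hderivF x hx]
    have hxne : x ≠ 0 := hx.ne'
    field_simp
    linear_combination 4 * c^2 * hs2sq
  · intro x hx
    obtain ⟨hx1, hxd⟩ := hx
    have hxpos : (0:ℝ) < x := by linarith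
    rw [hderiv2 x hxpos]
    have hlog : Real.log x ≤ L := Real.log_le_log (by linarith) hxd
    have : 2 * s2 * c / x + 4 * Real.log x / x = (2 * s2 * c + 4 * Real.log x) / x := by
      ring
    rw [this]
    apply div_neg_of_neg_of_pos _ hxpos
    linarith
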